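/- For a, b with 0 ≤ a < b ≤ 1 and (1-a)·b > 1/2, define p = 1/(2(1-a)) and F(θ) = p·((1-2a) + √(a² + (1-a)²)·(2θ-1)/√(θ² + (1-θ)²)) for θ ∈ [a, c*], where c* = (1-a-2b+4ab-2ab²)/(1-4(1-a)b+2(1-2a)b²). Then F(a) = 0, F is strictly increasing on [a, c*], and F satisfies, with Λ(θ) = ∫_a^θ F(t) dt, the identity (1-θ)·p + (1-2θ)·Λ(θ) + ((1-θ)² + θ²)·F(θ) = 1/2 for all θ ∈ [a, c*]. -/

import Mathlib

open MeasureTheory Set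

/-- Equilibrium failure probability `p = 1/(2(1-a))`. -/
noncomputable def pEq (a : ℝ) : ℝ := 1 / (2 * (1 - a))

/-- Top of the continuous part of the equilibrium support. -/
noncomputable def cStar (a b : ℝ) : ℝ :=
  (1 - a - 2*b + 4*a*b - 2*a*b^2) / (1 - 4*(1-a)*b + 2*(1-2*a)*b^2)

/-- The continuous part of the equilibrium cdf for firms restricted to `[a,b]`. -/
noncomputable def Fab (a θ : ℝ) : ℝ :=
  pEq a * ((1 - 2*a) + Real.sqrt (a^2 + (1-a)^2) * (2*θ - 1) / Real.sqrt (θ^2 + (1-θ)^2))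

lemma gq_pos (θ : ℝ) : 0 < θ^2 + (1-θ)^2 := by nlinarith [sq_nonneg (2*θ-1)]

lemma gsqrt_pos (θ : ℝ) : 0 < Real.sqrt (θ^2 + (1-θ)^2) := Real.sqrt_pos.mpr (gq_pos θ)

lemma gsq (θ : ℝ) : (Real.sqrt (θ^2 + (1-θ)^2))^2 = θ^2 + (1-θ)^2 :=
  Real.sq_sqrt (gq_pos θ).le

/-- derivative of sqrt(θ²+(1-θ)²) -/
lemma hasDerivAt_g (θ : ℝ) :
    HasDerivAt (fun t : ℝ => Real.sqrt (t^2 + (1-t)^2))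
      ((2*θ - 1) / Real.sqrt (θ^2 + (1-θ)^2)) θ := by
  have h1 : HasDerivAt (fun t : ℝ => t^2 + (1-t)^2) (4*θ - 2) θ := by
    have := ((hasDerivAt_pow 2 θ).add (((hasDerivAt_id θ).const_sub 1).pow 2))
    refine this.congr_deriv ?_
    simp [id]; ring
  have h2 := h1.sqrt (gq_pos θ).ne'
  convert h2 using 1
  have hne := (gsqrt_pos θ).ne'
  field_simp
  ring

lemma strictMono_m : StrictMono (fun θ : ℝ => (2*θ - 1) / Real.sqrt (θ^2 + (1-θ)^2)) := by
  apply strictMono_of_deriv_pos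
  intro x
  have hd : HasDerivAt (fun θ : ℝ => (2*θ - 1) / Real.sqrt (θ^2 + (1-θ)^2))
      ((2 * Real.sqrt (x^2+(1-x)^2) - (2*x-1) * ((2*x - 1) / Real.sqrt (x^2 + (1-x)^2)))
        / (Real.sqrt (x^2+(1-x)^2))^2) x := by
    have hnum : HasDerivAt (fun θ : ℝ => 2*θ - 1) 2 x := by
      simpa using ((hasDerivAt_id x).const_mul 2).sub_const 1
    exact hnum.div (hasDerivAt_g x) (gsqrt_pos x).ne'
  rw [hd.deriv]
  have hg := gsqrt_pos x
  have hg2 := gsq x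
  rw [div_pos_iff]
  left
  refine ⟨?_, by positivity⟩
  have e : (2*x-1) * ((2*x - 1) / Real.sqrt (x^2 + (1-x)^2))
      = (2*x-1)^2 / Real.sqrt (x^2 + (1-x)^2) := by ring
  rw [e, sub_pos, div_lt_iff₀ hg]
  nlinarith [hg2]

lemma Fab_eq (a θ : ℝ) :
    Fab a θ = pEq a * (1 - 2*a) + (pEq a * Real.sqrt (a^2 + (1-a)^2)) *
      ((2*θ - 1) / Real.sqrt (θ^2 + (1-θ)^2)) := by
  unfold Fab; ring

lemma continuous_Fab (a : ℝ) : Continuous (Fab a) := by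
  unfold Fab
  apply continuous_const.mul
  apply continuous_const.add
  apply Continuous.div
  · continuity
  · exact Real.continuous_sqrt.comp (by continuity)
  · exact fun x => (gsqrt_pos x).ne'

lemma integral_Fab (a : ℝ) (θ : ℝ) :
    ∫ t in a..θ, Fab a t =
      pEq a * ((1 - 2*a) * (θ - a) + Real.sqrt (a^2 + (1-a)^2) *
        (Real.sqrt (θ^2 + (1-θ)^2) - Real.sqrt (a^2 + (1-a)^2))) := by
  set K := Real.sqrt (a^2 + (1-a)^2) with hK
  have hderiv : ∀ t ∈ uIcc a θ,
      HasDerivAt (fun t => pEq a * ((1 - 2*a) * t + K * Real.sqrt (t^2 + (1-t)^2)))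
        (Fab a t) t := by
    intro t _
    have h1 : HasDerivAt (fun t : ℝ => (1 - 2*a) * t + K * Real.sqrt (t^2 + (1-t)^2))
        ((1 - 2*a) + K * ((2*t - 1) / Real.sqrt (t^2 + (1-t)^2))) t := by
      have := ((hasDerivAt_id t).const_mul (1 - 2*a)).add ((hasDerivAt_g t).const_mul K)
      simp at this; exact this
    have := h1.const_mul (pEq a)
    refine this.congr_deriv ?_
    unfold Fab
    ring
  have hint : IntervalIntegrable (Fab a) MeasureTheory.volume a θ :=
    (continuous_Fab a).intervalIntegrable a θ
  have := intervalIntegral.integral_eq_sub_of_hasDerivAt hderiv hint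
  rw [this]
  have haa : Real.sqrt (a^2 + (1-a)^2) = K := rfl
  rw [haa]
  ring

/-- For `0 ≤ a < b ≤ 1` with `(1-a)b > 1/2`: `Fab a a = 0`, `Fab a` is strictly
increasing on `[a, c*]`, and with `Λ(θ) = ∫_a^θ Fab a`, every `θ ∈ [a, c*]` satisfies
`(1-θ)p + (1-2θ)Λ(θ) + ((1-θ)² + θ²)·Fab a θ = 1/2`. -/
theorem stmt_16 (a b : ℝ) (ha : 0 ≤ a) (hb : b ≤ 1) (hab : a < b)
    (h : 1/2 < (1 - a) * b) :
    Fab a a = 0 ∧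
    StrictMonoOn (Fab a) (Icc a (cStar a b)) ∧
    ∀ θ ∈ Icc a (cStar a b),
      (1 - θ) * pEq a + (1 - 2*θ) * (∫ t in a..θ, Fab a t)
        + ((1-θ)^2 + θ^2) * Fab a θ = 1/2 := by
  have ha1 : a < 1 := by nlinarith
  have h1a : (1 : ℝ) - a ≠ 0 := by linarith [ha1]
  have h1a' : (0:ℝ) < 1 - a := by linarith
  have hp : 0 < pEq a := by unfold pEq; positivity
  have hKpos : 0 < Real.sqrt (a^2 + (1-a)^2) := gsqrt_pos a
  have hK2 : (Real.sqrt (a^2 + (1-a)^2))^2 = a^2 + (1-a)^2 := gsq a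
  refine ⟨?_, ?_, ?_⟩
  · unfold Fab
    rw [mul_comm (Real.sqrt (a^2 + (1-a)^2)) (2*a - 1), mul_div_assoc,
      div_self hKpos.ne', mul_one]
    ring
  · have hSM : StrictMono (Fab a) := by
      intro x y hxy
      rw [Fab_eq, Fab_eq]
      have := strictMono_m hxy
      have hc : 0 < pEq a * Real.sqrt (a^2 + (1-a)^2) := by positivity
      nlinarith [mul_lt_mul_of_pos_left this hc]
    exact hSM.strictMonoOn _
  · intro θ hθ
    rw [integral_Fab]
    set K := Real.sqrt (a^2 + (1-a)^2) with hKdef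
    set G := Real.sqrt (θ^2 + (1-θ)^2) with hGdef
    have hG : 0 < G := gsqrt_pos θ
    have hG2 : G^2 = θ^2 + (1-θ)^2 := gsq θ
    have e1 : ((1-θ)^2 + θ^2) * Fab a θ
        = pEq a * ((1 - 2*a) * (θ^2 + (1-θ)^2) + K * (2*θ - 1) * G) := by
      unfold Fab
      rw [show ((1-θ:ℝ))^2 + θ^2 = θ^2 + (1-θ)^2 by ring, ← hG2]
      rw [Real.sqrt_sq hG.le, ← hKdef]
      field_simp
    rw [e1]
    unfold pEq
    field_simp
    nlinarith [hK2, hG2]
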